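/- arXiv:2303.00982 — 7 statements merged into one kernel-verified Lean document; each statement's English description precedes it below -/
import Mathlib

section
/- For a real-valued integrable random variable Y and α ∈ (0,1), the upper conditional value-at-risk satisfies the dual representation: α · CVaR_U(α) = inf over β ∈ ℝ of (β·α + E[max(Y − β, 0)]), and the infimum is attained at the generalized quantile β* = inf{β : F(β) ≥ 1 − α}, where F is the CDF of Y. -/
open MeasureTheory

/-- Rockafellar–Uryasev dual representation of the upper conditional value-at-risk:
`α · CVaR_U(α) = inf_{β ∈ ℝ} (β·α + E[max(Y − β, 0)])`, with the infimum attained at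
the generalized quantile `q = inf{β : F(β) ≥ 1 − α}`. Here `CVaR_U(α)` is the mean of
the upper `α`-tail of `Y`, i.e. `(1/α)·(E[Y·1{Y > q}] + q·(F(q) − (1 − α)))`. -/
theorem cvar_upper_dual {Ω : Type*} [MeasurableSpace Ω] (μ : Measure Ω)
    [IsProbabilityMeasure μ] (Y : Ω → ℝ) (hY : Measurable Y) (hInt : Integrable Y μ)
    (α : ℝ) (hα : α ∈ Set.Ioo (0 : ℝ) 1)
    (F : ℝ → ℝ) (hF : ∀ β, F β = (μ {ω | Y ω ≤ β}).toReal)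
    (q : ℝ) (hq : q = sInf {β : ℝ | 1 - α ≤ F β})
    (CVaRU : ℝ)
    (hC : CVaRU = (1 / α) *
      ((∫ ω, (if q < Y ω then Y ω else 0) ∂μ) + q * (F q - (1 - α)))) :
    (α * CVaRU = q * α + ∫ ω, max (Y ω - q) 0 ∂μ) ∧
      ∀ β : ℝ, α * CVaRU ≤ β * α + ∫ ω, max (Y ω - β) 0 ∂μ := by
  obtain ⟨hα0, hα1⟩ := hα
  set ν : Measure ℝ := μ.map Y with hν
  have hνP : IsProbabilityMeasure ν := Measure.isProbabilityMeasure_map hY.aemeasurable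
  set f : StieltjesFunction ℝ := ProbabilityTheory.cdf ν with hfdef
  have hmap : ∀ s : Set ℝ, MeasurableSet s → ν s = μ (Y ⁻¹' s) := fun s hs =>
    Measure.map_apply hY hs
  have hFf : ∀ β, F β = f β := by
    intro β
    rw [hF, hfdef, ProbabilityTheory.cdf_eq_real, measureReal_def, hmap _ measurableSet_Iic]
    rfl
  -- the set defining the quantile
  set S : Set ℝ := {β : ℝ | 1 - α ≤ F β} with hS
  have hS_ne : S.Nonempty := by
    have h1 : (1 : ℝ) - α < 1 := by linarith
    have := (ProbabilityTheory.tendsto_cdf_atTop ν).eventually (eventually_ge_nhds h1)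
    obtain ⟨β, hβ⟩ := this.exists
    exact ⟨β, by simp only [hS, Set.mem_setOf_eq, hFf]; exact hβ⟩
  have hbdd : BddBelow S := by
    have h0 : (0 : ℝ) < 1 - α := by linarith
    have := (ProbabilityTheory.tendsto_cdf_atBot ν).eventually (eventually_lt_nhds h0)
    obtain ⟨b, hb⟩ := Filter.eventually_atBot.mp this
    refine ⟨b, fun β hβ => ?_⟩
    by_contra hcon
    push_neg at hcon
    have hfb : f β < 1 - α := hb β hcon.le
    have : (1 : ℝ) - α ≤ F β := hβ
    rw [hFf] at this
    linarith
  -- everything strictly above q is in S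
  have hIoiS : ∀ β, q < β → 1 - α ≤ f β := by
    intro β hβ
    obtain ⟨β₀, hβ₀S, hβ₀lt⟩ := exists_lt_of_csInf_lt hS_ne (by rw [← hq]; exact hβ)
    have h1 : (1 : ℝ) - α ≤ F β₀ := hβ₀S
    rw [hFf] at h1
    exact h1.trans (f.mono hβ₀lt.le)
  -- F(q) ≥ 1 - α by right continuity
  have hFq : 1 - α ≤ f q := by
    have hrc : Filter.Tendsto f (nhdsWithin q (Set.Ioi q)) (nhds (f q)) :=
      (f.right_continuous q).mono_left (nhdsWithin_mono q Set.Ioi_subset_Ici_self)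
    refine ge_of_tendsto hrc ?_
    filter_upwards [self_mem_nhdsWithin] with β hβ
    exact hIoiS β hβ
  -- left limit of F at q is ≤ 1 - α
  have hleft : Function.leftLim f q ≤ 1 - α := by
    refine le_of_tendsto (f.mono.tendsto_leftLim q) ?_
    filter_upwards [self_mem_nhdsWithin] with β hβ
    have hβS : β ∉ S := by
      intro hmem
      exact absurd (hq ▸ csInf_le hbdd hmem) (not_le.mpr hβ)
    have : ¬ (1 - α ≤ F β) := hβS
    rw [hFf] at this
    linarith
  -- probability of the strict upper tail
  have hqle : MeasurableSet {ω | Y ω ≤ q} := hY measurableSet_Iic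
  have hqlt : MeasurableSet {ω | q < Y ω} := by
    have : {ω | q < Y ω} = {ω | Y ω ≤ q}ᶜ := by ext ω; simp [not_le]
    rw [this]; exact hqle.compl
  have hPgt : (μ {ω | q < Y ω}).toReal = 1 - F q := by
    have hc : {ω | q < Y ω} = {ω | Y ω ≤ q}ᶜ := by ext ω; simp [not_le]
    rw [hc, measure_compl hqle (measure_ne_top μ _), measure_univ,
      ENNReal.toReal_sub_of_le prob_le_one ENNReal.one_ne_top, ENNReal.toReal_one, hF]
  -- probability of the weak upper tail is ≥ α
  have hqge : MeasurableSet {ω | q ≤ Y ω} := hY measurableSet_Ici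
  have hPge : α ≤ (μ {ω | q ≤ Y ω}).toReal := by
    have h1 : μ {ω | q ≤ Y ω} = ν (Set.Ici q) := by
      rw [hmap _ measurableSet_Ici]; rfl
    have h2 : ν (Set.Ici q) = ENNReal.ofReal (1 - Function.leftLim f q) := by
      conv_lhs => rw [← ProbabilityTheory.measure_cdf (μ := ν)]
      exact f.measure_Ici (ProbabilityTheory.tendsto_cdf_atTop ν) q
    rw [h1, h2, ENNReal.toReal_ofReal (by linarith)]
    linarith
  -- integrability
  have hI : ∀ β : ℝ, Integrable (fun ω => max (Y ω - β) 0) μ := fun β =>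
    (hInt.sub (integrable_const β)).pos_part
  have hIind : ∀ (s : Set Ω), MeasurableSet s → ∀ c : ℝ,
      Integrable (s.indicator (fun _ => c)) μ := fun s hs c =>
    (integrable_const c).indicator hs
  have hIndInt : ∀ (s : Set Ω) (hs : MeasurableSet s) (c : ℝ),
      ∫ ω, s.indicator (fun _ => c) ω ∂μ = c * (μ s).toReal := by
    intro s hs c
    rw [integral_indicator_const c hs]
    simp [mul_comm, measureReal_def]
  -- key identity (part 1)
  have key1 : ∫ ω, (if q < Y ω then Y ω else 0) ∂μ
      = (∫ ω, max (Y ω - q) 0 ∂μ) + q * (1 - F q) := by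
    have hptw : ∀ ω, (if q < Y ω then Y ω else 0)
        = max (Y ω - q) 0 + Set.indicator {ω | q < Y ω} (fun _ => q) ω := by
      intro ω
      by_cases h : q < Y ω
      · simp only [h, if_true, Set.indicator_of_mem (show ω ∈ {ω | q < Y ω} from h)]
        rw [max_eq_left (by linarith)]
        ring
      · simp only [h, if_false,
          Set.indicator_of_notMem (show ω ∉ {ω | q < Y ω} from h)]
        rw [max_eq_right (by push_neg at h; linarith)]
        ring
    calc ∫ ω, (if q < Y ω then Y ω else 0) ∂μ
        = ∫ ω, (max (Y ω - q) 0 + Set.indicator {ω | q < Y ω} (fun _ => q) ω) ∂μ := by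
          exact integral_congr_ae (Filter.Eventually.of_forall hptw)
      _ = (∫ ω, max (Y ω - q) 0 ∂μ) + ∫ ω, Set.indicator {ω | q < Y ω} (fun _ => q) ω ∂μ :=
          integral_add (hI q) (hIind _ hqlt q)
      _ = (∫ ω, max (Y ω - q) 0 ∂μ) + q * (1 - F q) := by
          rw [hIndInt _ hqlt q, hPgt]
  have part1 : α * CVaRU = q * α + ∫ ω, max (Y ω - q) 0 ∂μ := by
    rw [hC, key1]
    field_simp
    ring
  refine ⟨part1, fun β => ?_⟩
  rw [part1]
  rcases le_total q β with hqβ | hβq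
  · -- case q ≤ β
    have hptw : ∀ ω, max (Y ω - q) 0
        ≤ max (Y ω - β) 0 + Set.indicator {ω | q < Y ω} (fun _ => (β - q)) ω := by
      intro ω
      by_cases h : q < Y ω
      · rw [Set.indicator_of_mem (show ω ∈ {ω | q < Y ω} from h)]
        refine max_le (by have := le_max_left (Y ω - β) 0; linarith) ?_
        have := le_max_right (Y ω - β) 0
        linarith
      · rw [Set.indicator_of_notMem (show ω ∉ {ω | q < Y ω} from h)]
        push_neg at h
        rw [max_eq_right (by linarith)]
        have := le_max_right (Y ω - β) 0
        linarith
    have hmono := integral_mono (hI q) ((hI β).add (hIind _ hqlt (β - q)))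
      hptw
    rw [integral_add' (hI β) (hIind _ hqlt (β - q)), hIndInt _ hqlt (β - q), hPgt] at hmono
    have hfq : 1 - F q ≤ α := by rw [hFf]; linarith
    have hmul : (β - q) * (1 - F q) ≤ (β - q) * α :=
      mul_le_mul_of_nonneg_left hfq (by linarith)
    nlinarith [hmono, hmul]
  · -- case β ≤ q
    have hptw : ∀ ω, max (Y ω - q) 0 + Set.indicator {ω | q ≤ Y ω} (fun _ => (q - β)) ω
        ≤ max (Y ω - β) 0 := by
      intro ω
      by_cases h : q ≤ Y ω
      · rw [Set.indicator_of_mem (show ω ∈ {ω | q ≤ Y ω} from h),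
          max_eq_left (by linarith)]
        have := le_max_left (Y ω - β) 0
        linarith
      · rw [Set.indicator_of_notMem (show ω ∉ {ω | q ≤ Y ω} from h)]
        push_neg at h
        rw [max_eq_right (by linarith)]
        have := le_max_right (Y ω - β) 0
        linarith
    have hmono := integral_mono ((hI q).add (hIind _ hqge (q - β))) (hI β) hptw
    rw [integral_add' (hI q) (hIind _ hqge (q - β)), hIndInt _ hqge (q - β)] at hmono
    have hmul : (q - β) * α ≤ (q - β) * (μ {ω | q ≤ Y ω}).toReal :=
      mul_le_mul_of_nonneg_left hPge (by linarith)
    nlinarith [hmono, hmul]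
end

section
/- For a real-valued integrable random variable Y and α ∈ (0,1), the lower conditional value-at-risk satisfies: α · CVaR_L(α) = sup over β ∈ ℝ of (β·α + E[min(Y − β, 0)]), with the supremum attained at β* = Q(α), the α-quantile of Y. -/
open MeasureTheory

open ProbabilityTheory Filter Set Topology in
private lemma cvar_aux {Ω : Type*} [MeasurableSpace Ω] (μ : Measure Ω)
    [IsProbabilityMeasure μ] (Y : Ω → ℝ) (hY : Measurable Y) (hInt : Integrable Y μ)
    (α : ℝ) (hα : α ∈ Set.Ioo (0 : ℝ) 1)
    (F : ℝ → ℝ) (hF : ∀ β, F β = (μ {ω | Y ω ≤ β}).toReal)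
    (q : ℝ) (hq : q = sInf {β : ℝ | α ≤ F β}) :
    (μ {ω | Y ω < q}).toReal ≤ α ∧ α ≤ (μ {ω | Y ω ≤ q}).toReal := by
  obtain ⟨hα0, hα1⟩ := hα
  set ν : Measure ℝ := μ.map Y with hν
  have hνP : IsProbabilityMeasure ν := Measure.isProbabilityMeasure_map hY.aemeasurable
  have hle : ∀ β : ℝ, μ {ω | Y ω ≤ β} = ν (Iic β) := by
    intro β; rw [hν, Measure.map_apply hY measurableSet_Iic]; rfl
  have hlt : ∀ β : ℝ, μ {ω | Y ω < β} = ν (Iio β) := by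
    intro β; rw [hν, Measure.map_apply hY measurableSet_Iio]; rfl
  have hFc : ∀ β, F β = cdf ν β := by
    intro β; rw [hF, hle, cdf_eq_real, measureReal_def]
  set S : Set ℝ := {β : ℝ | α ≤ F β} with hS
  have hSne : S.Nonempty := by
    have := (tendsto_cdf_atTop ν).eventually (eventually_gt_nhds hα1)
    obtain ⟨β, hβ⟩ := this.exists
    exact ⟨β, by rw [hS, mem_setOf_eq, hFc]; exact hβ.le⟩
  have hSbdd : BddBelow S := by
    have := (tendsto_cdf_atBot ν).eventually (eventually_lt_nhds hα0)
    obtain ⟨β0, hβ0⟩ := this.exists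
    refine ⟨β0, fun x hx => ?_⟩
    by_contra hc
    push_neg at hc
    have : F x ≤ cdf ν β0 := by rw [hFc]; exact monotone_cdf ν hc.le
    exact absurd (hx.trans this) (not_le.mpr hβ0)
  -- every x > q is in S
  have hmemS : ∀ x, q < x → α ≤ cdf ν x := by
    intro x hx
    obtain ⟨s, hs, hsx⟩ := (csInf_lt_iff hSbdd hSne).mp (hq ▸ hx)
    calc α ≤ F s := hs
    _ = cdf ν s := hFc s
    _ ≤ cdf ν x := monotone_cdf ν hsx.le
  constructor
  · -- μ {Y < q} ≤ α
    have hsub : ∀ x, x < q → cdf ν x < α := by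
      intro x hx
      by_contra hc
      push_neg at hc
      have : x ∈ S := by rw [hS, mem_setOf_eq, hFc]; exact hc
      exact absurd (hq ▸ csInf_le hSbdd this) (not_le.mpr hx)
    have hU : Iio q = ⋃ n : ℕ, Iic (q - 1 / (n + 1)) := by
      ext x
      simp only [mem_Iio, mem_iUnion, mem_Iic]
      constructor
      · intro hx
        obtain ⟨n, hn⟩ := exists_nat_one_div_lt (sub_pos.mpr hx)
        exact ⟨n, by linarith⟩
      · rintro ⟨n, hn⟩
        have : (0:ℝ) < 1 / (n + 1) := by positivity
        linarith
    have hmono : Monotone fun n : ℕ => Iic (q - 1 / (n + 1)) := by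
      intro m n hmn
      apply Iic_subset_Iic.mpr
      have hc : (m:ℝ) ≤ (n:ℝ) := Nat.cast_le.mpr hmn
      have : (1:ℝ) / (n + 1) ≤ 1 / (m + 1) := by
        apply one_div_le_one_div_of_le (by positivity)
        linarith
      linarith
    have hval : ν (Iio q) ≤ ENNReal.ofReal α := by
      rw [hU, hmono.directed_le.measure_iUnion]
      apply iSup_le
      intro n
      rw [← ofReal_cdf]
      apply ENNReal.ofReal_le_ofReal
      have hpos : (0:ℝ) < 1 / ((n:ℝ) + 1) := by positivity
      exact (hsub _ (by linarith)).le
    rw [hlt]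
    calc (ν (Iio q)).toReal ≤ (ENNReal.ofReal α).toReal :=
          ENNReal.toReal_mono ENNReal.ofReal_ne_top hval
    _ = α := ENNReal.toReal_ofReal hα0.le
  · -- α ≤ μ {Y ≤ q}
    rw [hle, ← measureReal_def, ← cdf_eq_real]
    have hrc : ContinuousWithinAt (cdf ν) (Ici q) q := (cdf ν).right_continuous q
    have htend : Tendsto (cdf ν) (𝓝[>] q) (𝓝 (cdf ν q)) :=
      hrc.tendsto.mono_left (nhdsWithin_mono _ Ioi_subset_Ici_self)
    refine ge_of_tendsto htend ?_
    filter_upwards [self_mem_nhdsWithin] with x hx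
    exact hmemS x hx

/-- Dual representation of the lower conditional value-at-risk:
`α · CVaR_L(α) = sup_{β ∈ ℝ} (β·α + E[min(Y − β, 0)])`, with the supremum attained at
the `α`-quantile `q = inf{β : F(β) ≥ α}`. Here `CVaR_L(α)` is the mean of the lower
`α`-tail of `Y`, i.e. `(1/α)·(E[Y·1{Y < q}] + q·(α − P(Y < q)))`. -/
theorem cvar_lower_dual {Ω : Type*} [MeasurableSpace Ω] (μ : Measure Ω)
    [IsProbabilityMeasure μ] (Y : Ω → ℝ) (hY : Measurable Y) (hInt : Integrable Y μ)
    (α : ℝ) (hα : α ∈ Set.Ioo (0 : ℝ) 1)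
    (F : ℝ → ℝ) (hF : ∀ β, F β = (μ {ω | Y ω ≤ β}).toReal)
    (q : ℝ) (hq : q = sInf {β : ℝ | α ≤ F β})
    (CVaRL : ℝ)
    (hC : CVaRL = (1 / α) *
      ((∫ ω, (if Y ω < q then Y ω else 0) ∂μ) + q * (α - (μ {ω | Y ω < q}).toReal))) :
    (α * CVaRL = q * α + ∫ ω, min (Y ω - q) 0 ∂μ) ∧
      ∀ β : ℝ, β * α + ∫ ω, min (Y ω - β) 0 ∂μ ≤ α * CVaRL := by
  obtain ⟨hp1, hp2⟩ := cvar_aux μ Y hY hInt α hα F hF q hq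
  obtain ⟨hα0, hα1⟩ := hα
  have hmLt : ∀ c : ℝ, MeasurableSet {ω | Y ω < c} := fun c => hY measurableSet_Iio
  have hmLe : ∀ c : ℝ, MeasurableSet {ω | Y ω ≤ c} := fun c => hY measurableSet_Iic
  -- integrability of min functions
  have intMin : ∀ β : ℝ, Integrable (fun ω => min (Y ω - β) 0) μ := by
    intro β
    have h1 : Integrable (fun ω => Y ω - β) μ := hInt.sub (integrable_const β)
    refine h1.mono (((hY.sub_const β).min measurable_const).aestronglyMeasurable) ?_
    filter_upwards with ω
    simp only [Real.norm_eq_abs]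
    rcases le_total (Y ω - β) 0 with h | h
    · rw [min_eq_left h]
    · rw [min_eq_right h]; simp [abs_nonneg]
  have intInd : Integrable (fun ω => if Y ω < q then Y ω else 0) μ := by
    have := hInt.indicator (hmLt q)
    refine this.congr (Filter.Eventually.of_forall fun ω => ?_)
    simp [Set.indicator_apply]
  have intIndC : ∀ (s : Set Ω) (_ : MeasurableSet s) (c : ℝ),
      Integrable (s.indicator fun _ => c) μ := fun s hs c => (integrable_const c).indicator hs
  -- key integral identity at q
  have hkey : ∫ ω, min (Y ω - q) 0 ∂μ
      = (∫ ω, (if Y ω < q then Y ω else 0) ∂μ) - q * (μ {ω | Y ω < q}).toReal := by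
    have hfun : (fun ω => min (Y ω - q) 0)
        = fun ω => (if Y ω < q then Y ω else 0) - ({ω | Y ω < q}.indicator fun _ => q) ω := by
      funext ω
      simp only [Set.indicator_apply, Set.mem_setOf_eq]
      split_ifs with h
      · rw [min_eq_left (by linarith)]
      · rw [min_eq_right (by push_neg at h; linarith)]; ring
    rw [hfun, integral_sub intInd (intIndC _ (hmLt q) q), integral_indicator_const _ (hmLt q)]
    simp [mul_comm, measureReal_def]
  have h1 : α * CVaRL = q * α + ∫ ω, min (Y ω - q) 0 ∂μ := by
    rw [hC, hkey]
    field_simp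
    ring
  refine ⟨h1, fun β => ?_⟩
  rw [h1]
  rcases le_or_gt β q with hb | hb
  · -- β ≤ q : show β*α + ∫min(Y-β) ≤ q*α + ∫min(Y-q)
    have hDle : ∀ ω, min (Y ω - β) 0 - min (Y ω - q) 0
        ≤ ({ω | Y ω < q}.indicator fun _ => q - β) ω := by
      intro ω
      simp only [Set.indicator_apply, Set.mem_setOf_eq]
      split_ifs with h
      · have h2 : min (Y ω - q) 0 = Y ω - q := min_eq_left (by linarith)
        rcases le_total (Y ω) β with h3 | h3
        · have hA : min (Y ω - β) 0 = Y ω - β := min_eq_left (by linarith)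
          rw [hA, h2]; linarith
        · have hA : min (Y ω - β) 0 = 0 := min_eq_right (by linarith)
          rw [hA, h2]; linarith
      · push_neg at h
        have h2 : min (Y ω - q) 0 = 0 := min_eq_right (by linarith)
        have hA : min (Y ω - β) 0 = 0 := min_eq_right (by linarith)
        rw [hA, h2]; linarith
    have := integral_mono ((intMin β).sub (intMin q)) (intIndC _ (hmLt q) (q - β))
      (fun ω => hDle ω)
    simp only [Pi.sub_apply] at this
    rw [integral_sub (intMin β) (intMin q), integral_indicator_const _ (hmLt q)] at this
    have hμα : (μ {ω | Y ω < q}).toReal * (q - β) ≤ α * (q - β) :=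
      mul_le_mul_of_nonneg_right hp1 (by linarith)
    simp only [smul_eq_mul, measureReal_def] at this
    nlinarith
  · -- q < β
    have hDle : ∀ ω, min (Y ω - β) 0 - min (Y ω - q) 0
        ≤ ({ω | Y ω ≤ q}.indicator fun _ => q - β) ω := by
      intro ω
      simp only [Set.indicator_apply, Set.mem_setOf_eq]
      split_ifs with h
      · have h2 : min (Y ω - q) 0 = Y ω - q := min_eq_left (by linarith)
        have hA : min (Y ω - β) 0 = Y ω - β := min_eq_left (by linarith)
        rw [hA, h2]; linarith
      · push_neg at h
        have h2 : min (Y ω - q) 0 = 0 := min_eq_right (by linarith)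
        have hA := min_le_right (Y ω - β) (0:ℝ)
        rw [h2]; linarith
    have := integral_mono ((intMin β).sub (intMin q)) (intIndC _ (hmLe q) (q - β))
      (fun ω => hDle ω)
    simp only [Pi.sub_apply] at this
    rw [integral_sub (intMin β) (intMin q), integral_indicator_const _ (hmLe q)] at this
    have hμα : (μ {ω | Y ω ≤ q}).toReal * (q - β) ≤ α * (q - β) :=
      mul_le_mul_of_nonpos_right hp2 (by linarith)
    simp only [smul_eq_mul, measureReal_def] at this
    nlinarith
end

section
/- If Y is a {0,1}-valued random variable with P(Y = 1) = p_Y, and s₀, s₁ > 0 with p = s₀/s₁ ∈ (0,1], then inf over β ∈ ℝ of (β·s₀ + s₁·E[max(Y − β, 0)]) = s₀ + min(0, s₁·p_Y − s₀). -/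
open MeasureTheory

/-- Binary-outcome closed form of the dual CVaR representation used in the upper
trimming (Lee) bound numerator: for a `{0,1}`-valued outcome `Y` with `P(Y=1) = p_Y`
and `s₀, s₁ > 0` with `p = s₀/s₁ ∈ (0,1]`,
`inf_{β ∈ ℝ} (β·s₀ + s₁·E[max(Y − β, 0)]) = s₀ + min(0, s₁·p_Y − s₀)`. -/
theorem lee_binary_upper {Ω : Type*} [MeasurableSpace Ω] (μ : Measure Ω)
    [IsProbabilityMeasure μ] (Y : Ω → ℝ) (hY : Measurable Y)
    (hbin : ∀ ω, Y ω = 0 ∨ Y ω = 1)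
    (pY s₀ s₁ : ℝ) (hpY : pY = (μ {ω | Y ω = 1}).toReal)
    (hs₀ : 0 < s₀) (hs₁ : 0 < s₁) (hp : s₀ / s₁ ≤ 1) :
    (⨅ β : ℝ, (β * s₀ + s₁ * ∫ ω, max (Y ω - β) 0 ∂μ)) =
      s₀ + min 0 (s₁ * pY - s₀) := by
  have hA : MeasurableSet {ω | Y ω = 1} := hY (measurableSet_singleton 1)
  have hYind : Y = Set.indicator {ω | Y ω = 1} (fun _ => (1:ℝ)) := by
    funext ω
    rcases hbin ω with h | h
    · rw [h, Set.indicator_of_notMem]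
      simp [Set.mem_setOf_eq, h]
    · rw [h, Set.indicator_of_mem]
      exact h
  have hYint : Integrable Y μ := by
    rw [hYind]
    exact (integrable_const (1:ℝ)).indicator hA
  have hintY : ∫ ω, Y ω ∂μ = pY := by
    rw [hpY, hYind, integral_indicator_const _ hA]
    simp
    rfl
  have hpY0 : 0 ≤ pY := by rw [hpY]; exact ENNReal.toReal_nonneg
  have hpY1 : pY ≤ 1 := by
    rw [hpY]
    have := prob_le_one (μ := μ) (s := {ω | Y ω = 1})
    simpa using ENNReal.toReal_mono (by simp) this
  have hs : s₀ ≤ s₁ := by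
    have := (div_le_one hs₁).mp hp
    linarith
  -- closed form of the integral
  have hInt : ∀ β : ℝ, ∫ ω, max (Y ω - β) 0 ∂μ
      = pY * max (1 - β) 0 + (1 - pY) * max (-β) 0 := by
    intro β
    have heq : ∀ ω, max (Y ω - β) 0
        = (max (1 - β) 0 - max (-β) 0) * Y ω + max (-β) 0 := by
      intro ω
      rcases hbin ω with h | h <;> rw [h] <;> ring_nf
    calc ∫ ω, max (Y ω - β) 0 ∂μ
        = ∫ ω, ((max (1 - β) 0 - max (-β) 0) * Y ω + max (-β) 0) ∂μ := by
          exact integral_congr_ae (Filter.Eventually.of_forall heq)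
      _ = (max (1 - β) 0 - max (-β) 0) * (∫ ω, Y ω ∂μ) + max (-β) 0 := by
          rw [integral_add (hYint.const_mul _) (integrable_const _),
            integral_const_mul, integral_const]
          simp
      _ = pY * max (1 - β) 0 + (1 - pY) * max (-β) 0 := by
          rw [hintY]; ring
  have key : ∀ β : ℝ, β * s₀ + s₁ * ∫ ω, max (Y ω - β) 0 ∂μ
      = β * s₀ + s₁ * (pY * max (1 - β) 0 + (1 - pY) * max (-β) 0) := by
    intro β; rw [hInt β]
  -- rewrite target RHS
  have hrhs : s₀ + min 0 (s₁ * pY - s₀) = min s₀ (s₁ * pY) := by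
    rcases le_total (s₁ * pY) s₀ with h | h
    · rw [min_eq_right (by linarith), min_eq_right h]; ring
    · rw [min_eq_left (by linarith), min_eq_left h]; ring
  rw [hrhs]
  -- lower bound for each β
  have hlb : ∀ β : ℝ, min s₀ (s₁ * pY) ≤ β * s₀ + s₁ * ∫ ω, max (Y ω - β) 0 ∂μ := by
    intro β
    rw [key β]
    have hm : min s₀ (s₁ * pY) ≤ s₀ := min_le_left _ _
    have hm' : min s₀ (s₁ * pY) ≤ s₁ * pY := min_le_right _ _
    rcases le_total β 0 with hβ | hβ
    · rw [max_eq_left (by linarith), max_eq_left (by linarith)]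
      nlinarith
    · rcases le_total β 1 with hβ1 | hβ1
      · rw [max_eq_left (by linarith), max_eq_right (by linarith)]
        nlinarith
      · rw [max_eq_right (by linarith), max_eq_right (by linarith)]
        nlinarith
  apply le_antisymm
  · rcases le_total s₀ (s₁ * pY) with h | h
    · rw [min_eq_left h]
      refine ciInf_le_of_le ⟨min s₀ (s₁ * pY), fun x hx => ?_⟩ 1 ?_
      · obtain ⟨β, rfl⟩ := hx
        exact hlb β
      · rw [key 1]; simp
    · rw [min_eq_right h]
      refine ciInf_le_of_le ⟨min s₀ (s₁ * pY), fun x hx => ?_⟩ 0 ?_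
      · obtain ⟨β, rfl⟩ := hx
        exact hlb β
      · rw [key 0]; simp
  · exact le_ciInf hlb
end

section
/- If Y is a {0,1}-valued random variable with P(Y = 1) = p_Y, and s₀, s₁ > 0, then sup over β ∈ ℝ of (β·s₀ + s₁·E[min(Y − β, 0)]) = max(s₀ − s₁·(1 − p_Y), 0). -/
open MeasureTheory

/-- Binary-outcome closed form for the lower trimming (Lee) bound numerator:
for a `{0,1}`-valued outcome `Y` with `P(Y=1) = p_Y` and `s₀, s₁ > 0` (with the
always-takers share `p = s₀/s₁ ∈ (0,1]`),
`sup_{β ∈ ℝ} (β·s₀ + s₁·E[min(Y − β, 0)]) = max(s₀ − s₁·(1 − p_Y), 0)`. -/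
theorem lee_binary_lower {Ω : Type*} [MeasurableSpace Ω] (μ : Measure Ω)
    [IsProbabilityMeasure μ] (Y : Ω → ℝ) (hY : Measurable Y)
    (hbin : ∀ ω, Y ω = 0 ∨ Y ω = 1)
    (pY s₀ s₁ : ℝ) (hpY : pY = (μ {ω | Y ω = 1}).toReal)
    (hs₀ : 0 < s₀) (hs₁ : 0 < s₁) (hp : s₀ / s₁ ≤ 1) :
    (⨆ β : ℝ, (β * s₀ + s₁ * ∫ ω, min (Y ω - β) 0 ∂μ)) =
      max (s₀ - s₁ * (1 - pY)) 0 := by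
  have hA : MeasurableSet {ω | Y ω = 1} := hY (measurableSet_singleton 1)
  have hpY0 : 0 ≤ pY := by rw [hpY]; exact ENNReal.toReal_nonneg
  have hpY1 : pY ≤ 1 := by
    rw [hpY]
    have := prob_le_one (μ := μ) (s := {ω | Y ω = 1})
    exact ENNReal.toReal_le_of_le_ofReal zero_le_one (by simpa using this)
  have hs : s₀ ≤ s₁ := by
    have := (div_le_one hs₁).mp hp
    linarith
  have key : ∀ β : ℝ, ∫ ω, min (Y ω - β) 0 ∂μ
      = min (-β) 0 + (min (1 - β) 0 - min (-β) 0) * pY := by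
    intro β
    have hfun : (fun ω => min (Y ω - β) 0)
        = fun ω => min (-β) 0 + Set.indicator {ω | Y ω = 1}
            (fun _ => min (1 - β) 0 - min (-β) 0) ω := by
      funext ω
      rcases hbin ω with h | h
      · simp [Set.indicator_apply, h]
      · simp [Set.indicator_apply, h]
    rw [hfun, integral_add (integrable_const _)
        ((integrable_const _).indicator hA), integral_const,
      integral_indicator_const _ hA]
    simp [hpY, smul_eq_mul, mul_comm, measureReal_def]
  set M := max (s₀ - s₁ * (1 - pY)) 0 with hM
  have hM0 : (0:ℝ) ≤ M := le_max_right _ _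
  have hM1 : s₀ - s₁ * (1 - pY) ≤ M := le_max_left _ _
  set f : ℝ → ℝ := fun β => β * s₀ + s₁ * ∫ ω, min (Y ω - β) 0 ∂μ with hf
  have hub : ∀ β, f β ≤ M := by
    intro β
    simp only [hf, key β]
    rcases le_total β 0 with h | h
    · rw [min_eq_right (neg_nonneg.2 h), min_eq_right (by linarith : (0:ℝ) ≤ 1 - β)]
      nlinarith
    · rcases le_total β 1 with h1 | h1
      · rw [min_eq_left (neg_nonpos.2 h), min_eq_right (by linarith : (0:ℝ) ≤ 1 - β)]
        rcases le_total (s₀ - s₁ * (1 - pY)) 0 with hc | hc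
        · nlinarith
        · nlinarith
      · rw [min_eq_left (neg_nonpos.2 h), min_eq_left (by linarith : 1 - β ≤ 0)]
        nlinarith [(β - 1) * (s₁ - s₀)]
  have hbdd : BddAbove (Set.range f) := ⟨M, by rintro x ⟨β, rfl⟩; exact hub β⟩
  apply le_antisymm
  · exact ciSup_le hub
  · rw [hM]
    apply max_le
    · have h1 : f 1 ≤ ⨆ β, f β := le_ciSup hbdd 1
      have : f 1 = s₀ - s₁ * (1 - pY) := by
        simp only [hf, key 1]; norm_num; ring
      linarith [h1, this.symm.le]
    · have h0 : f 0 ≤ ⨆ β, f β := le_ciSup hbdd 0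
      have : f 0 = 0 := by simp only [hf, key 0]; norm_num
      linarith
end

section
/- Suppose (S(1), S(0)) ⟂ Z | X, and S = S(1)·D + S(0)·(1−D) with D determined by the Roy selection rule D = 1 if S(1) > S(0), D = 0 if S(1) < S(0). Then for every z in the support of Z given X = x: P(S(1) = 1, S(0) = 0 | X = x) ≤ P(S = 1, D = 1 | Z = z, X = x), and hence P(S(1) = 1, S(0) = 0) ≤ E_X[inf_z P(S = 1, D = 1 | Z = z, X)]. -/
open MeasureTheory

/-- Conditional probability `P(A | B)` as a real number. -/
noncomputable def condP {Ω : Type*} [MeasurableSpace Ω] (μ : Measure Ω) (A B : Set Ω) : ℝ :=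
  (μ (A ∩ B)).toReal / (μ B).toReal

/-- Covariate-assisted Roy model (Mourifié–Henry) bounds: if `(S(1), S(0)) ⟂ Z ∣ X`,
the agent chooses `D` by the Roy rule (`S(1) > S(0) ⟹ D = 1`, `S(1) < S(0) ⟹ D = 0`), and
`S = S(1)·D + S(0)·(1−D)`, then for every `x` and every `z` in the (common) support,
`P(S(1)=1, S(0)=0 ∣ X=x) ≤ P(S=1, D=1 ∣ Z=z, X=x)`, and hence
`P(S(1)=1, S(0)=0) ≤ E_X[inf_z P(S=1, D=1 ∣ Z=z, X)]`. -/
theorem roy_bounds {Ω 𝒳 𝒵 : Type*} [MeasurableSpace Ω] [Fintype 𝒳] [Fintype 𝒵]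
    [Nonempty 𝒵] (μ : Measure Ω) [IsProbabilityMeasure μ]
    (S1 S0 D S : Ω → ℕ) (X : Ω → 𝒳) (Z : Ω → 𝒵)
    (hS1 : ∀ ω, S1 ω = 0 ∨ S1 ω = 1) (hS0 : ∀ ω, S0 ω = 0 ∨ S0 ω = 1)
    (hroy : ∀ ω, (S1 ω > S0 ω → D ω = 1) ∧ (S1 ω < S0 ω → D ω = 0))
    (hD : ∀ ω, D ω = 0 ∨ D ω = 1)
    (hS : ∀ ω, S ω = if D ω = 1 then S1 ω else S0 ω)
    (hpos : ∀ (x : 𝒳) (z : 𝒵), μ ({ω | Z ω = z} ∩ {ω | X ω = x}) ≠ 0)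
    (hCI : ∀ (x : 𝒳) (A : Set (ℕ × ℕ)) (z : 𝒵),
      condP μ ({ω | (S1 ω, S0 ω) ∈ A} ∩ {ω | Z ω = z}) {ω | X ω = x} =
        condP μ {ω | (S1 ω, S0 ω) ∈ A} {ω | X ω = x} *
          condP μ {ω | Z ω = z} {ω | X ω = x}) :
    (∀ (x : 𝒳) (z : 𝒵),
        condP μ {ω | S1 ω = 1 ∧ S0 ω = 0} {ω | X ω = x} ≤
          condP μ {ω | S ω = 1 ∧ D ω = 1} ({ω | Z ω = z} ∩ {ω | X ω = x})) ∧
      (μ {ω | S1 ω = 1 ∧ S0 ω = 0}).toReal ≤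
        ∑ x : 𝒳, (μ {ω | X ω = x}).toReal *
          ⨅ z : 𝒵, condP μ {ω | S ω = 1 ∧ D ω = 1} ({ω | Z ω = z} ∩ {ω | X ω = x}) := by
  have hsub : {ω | S1 ω = 1 ∧ S0 ω = 0} ⊆ {ω | S ω = 1 ∧ D ω = 1} := by
    rintro ω ⟨h1, h0⟩
    have hd : D ω = 1 := (hroy ω).1 (by omega)
    exact ⟨by rw [hS ω, if_pos hd]; exact h1, hd⟩
  have part1 : ∀ (x : 𝒳) (z : 𝒵),
      condP μ {ω | S1 ω = 1 ∧ S0 ω = 0} {ω | X ω = x} ≤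
        condP μ {ω | S ω = 1 ∧ D ω = 1} ({ω | Z ω = z} ∩ {ω | X ω = x}) := by
    intro x z
    have hb0 : μ ({ω | Z ω = z} ∩ {ω | X ω = x}) ≠ 0 := hpos x z
    have hbt : (0:ℝ) < (μ ({ω | Z ω = z} ∩ {ω | X ω = x})).toReal :=
      ENNReal.toReal_pos hb0 (measure_ne_top μ _)
    have hm : μ {ω | X ω = x} ≠ 0 := fun h =>
      hb0 (le_antisymm (le_trans (measure_mono Set.inter_subset_right) h.le) zero_le)
    have hmt : (0:ℝ) < (μ {ω | X ω = x}).toReal :=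
      ENNReal.toReal_pos hm (measure_ne_top μ _)
    have hA := hCI x {(1,0)} z
    have hset : {ω | (S1 ω, S0 ω) ∈ ({(1,0)} : Set (ℕ × ℕ))} =
        {ω | S1 ω = 1 ∧ S0 ω = 0} := by
      ext ω; simp [Prod.ext_iff]
    rw [hset] at hA
    unfold condP at hA ⊢
    rw [Set.inter_assoc] at hA
    set a := (μ ({ω | S1 ω = 1 ∧ S0 ω = 0} ∩ ({ω | Z ω = z} ∩ {ω | X ω = x}))).toReal with ha
    set b := (μ ({ω | Z ω = z} ∩ {ω | X ω = x})).toReal with hbdef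
    set c := (μ ({ω | S1 ω = 1 ∧ S0 ω = 0} ∩ {ω | X ω = x})).toReal with hc
    set m := (μ {ω | X ω = x}).toReal with hmdef
    have key : c / m = a / b := by
      rw [div_eq_div_iff hmt.ne' hbt.ne']
      have h2 : (a * m) * m = (c * b) * m := by
        field_simp at hA
        linear_combination m * hA
      have := mul_right_cancel₀ hmt.ne' h2
      linarith
    rw [key]
    have hnum : a ≤ (μ ({ω | S ω = 1 ∧ D ω = 1} ∩ ({ω | Z ω = z} ∩ {ω | X ω = x}))).toReal := by
      apply ENNReal.toReal_le_toReal (measure_ne_top μ _) (measure_ne_top μ _) |>.mpr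
      exact measure_mono (Set.inter_subset_inter_left _ hsub)
    gcongr
  refine ⟨part1, ?_⟩
  have hcover : {ω | S1 ω = 1 ∧ S0 ω = 0} =
      ⋃ x : 𝒳, ({ω | S1 ω = 1 ∧ S0 ω = 0} ∩ {ω | X ω = x}) := by
    ext ω; simp
  have hle : (μ {ω | S1 ω = 1 ∧ S0 ω = 0}).toReal ≤
      ∑ x : 𝒳, (μ ({ω | S1 ω = 1 ∧ S0 ω = 0} ∩ {ω | X ω = x})).toReal := by
    have h1 : μ {ω | S1 ω = 1 ∧ S0 ω = 0} ≤
        ∑ x : 𝒳, μ ({ω | S1 ω = 1 ∧ S0 ω = 0} ∩ {ω | X ω = x}) := by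
      conv_lhs => rw [hcover]
      exact measure_iUnion_fintype_le μ _
    rw [← ENNReal.toReal_sum (fun x _ => measure_ne_top μ _)]
    exact (ENNReal.toReal_le_toReal (measure_ne_top μ _)
      (by simp [measure_lt_top μ] : (∑ x : 𝒳, μ ({ω | S1 ω = 1 ∧ S0 ω = 0} ∩ {ω | X ω = x})) ≠ ⊤)).mpr h1
  refine le_trans hle (Finset.sum_le_sum fun x _ => ?_)
  have hm : μ {ω | X ω = x} ≠ 0 := fun h =>
    hpos x (Classical.arbitrary 𝒵)
      (le_antisymm (le_trans (measure_mono Set.inter_subset_right) h.le) zero_le)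
  have hmt : (0:ℝ) < (μ {ω | X ω = x}).toReal :=
    ENNReal.toReal_pos hm (measure_ne_top μ _)
  have heq : (μ ({ω | S1 ω = 1 ∧ S0 ω = 0} ∩ {ω | X ω = x})).toReal =
      (μ {ω | X ω = x}).toReal * condP μ {ω | S1 ω = 1 ∧ S0 ω = 0} {ω | X ω = x} := by
    unfold condP; field_simp
  rw [heq]
  apply mul_le_mul_of_nonneg_left _ hmt.le
  exact le_ciInf fun z => part1 x z
end

section
/- Let F₁, F₀ be CDFs of random variables S(1), S(0) on a common probability space, and let Δ = S(1) − S(0). Then for any d, t ∈ ℝ: P(Δ ≤ d) ≥ F₁(t) − P(S(0) < t − d), and hence P(Δ ≤ d) ≥ sup_t max(F₁(t) − F₀((t−d)⁻), 0), the lower Makarov bound. -/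
open MeasureTheory

/-- Lower Makarov bound on the CDF of the treatment effect `Δ = S(1) − S(0)`:
for all `d, t`, `P(Δ ≤ d) ≥ F₁(t) − P(S(0) < t − d)`, and hence
`P(Δ ≤ d) ≥ sup_t max(F₁(t) − F₀((t−d)⁻), 0)`, the lower Makarov bound. -/
theorem makarov_lower {Ω : Type*} [MeasurableSpace Ω] (μ : Measure Ω)
    [IsProbabilityMeasure μ] (S1 S0 : Ω → ℝ) (h1 : Measurable S1) (h0 : Measurable S0) :
    (∀ d t : ℝ,
        (μ {ω | S1 ω ≤ t}).toReal - (μ {ω | S0 ω < t - d}).toReal ≤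
          (μ {ω | S1 ω - S0 ω ≤ d}).toReal) ∧
      ∀ d : ℝ,
        (⨆ t : ℝ, max ((μ {ω | S1 ω ≤ t}).toReal - (μ {ω | S0 ω < t - d}).toReal) 0) ≤
          (μ {ω | S1 ω - S0 ω ≤ d}).toReal := by
  have key : ∀ d t : ℝ,
      (μ {ω | S1 ω ≤ t}).toReal - (μ {ω | S0 ω < t - d}).toReal ≤
        (μ {ω | S1 ω - S0 ω ≤ d}).toReal := by
    intro d t
    have hsub : {ω | S1 ω ≤ t} ⊆ {ω | S1 ω - S0 ω ≤ d} ∪ {ω | S0 ω < t - d} := by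
      intro ω hω
      by_cases h : S0 ω < t - d
      · exact Or.inr h
      · exact Or.inl (by push_neg at h; simp only [Set.mem_setOf_eq] at hω ⊢; linarith)
    have hμ : μ {ω | S1 ω ≤ t} ≤ μ {ω | S1 ω - S0 ω ≤ d} + μ {ω | S0 ω < t - d} :=
      (measure_mono hsub).trans (measure_union_le _ _)
    have hf1 : μ {ω | S1 ω ≤ t} ≠ ⊤ := measure_ne_top μ _
    have hf2 : μ {ω | S1 ω - S0 ω ≤ d} ≠ ⊤ := measure_ne_top μ _
    have hf3 : μ {ω | S0 ω < t - d} ≠ ⊤ := measure_ne_top μ _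
    have := ENNReal.toReal_mono (by finiteness) hμ
    rw [ENNReal.toReal_add hf2 hf3] at this
    linarith
  refine ⟨key, fun d => ?_⟩
  refine ciSup_le fun t => ?_
  exact max_le (key d t) ENNReal.toReal_nonneg
end

section
/- Let F₁, F₀ be CDFs of S(1), S(0) on a common probability space and Δ = S(1) − S(0). Then for any d, t ∈ ℝ: P(Δ ≤ d) ≤ 1 + min(F₁(t) − P(S(0) < t − d), 0), and hence P(Δ ≤ d) ≤ inf_t [1 + min(F₁(t) − F₀((t−d)⁻), 0)], the upper Makarov bound. -/
open MeasureTheory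

/-- Upper Makarov bound on the CDF of the treatment effect `Δ = S(1) − S(0)`:
for all `d, t`, `P(Δ ≤ d) ≤ 1 + min(F₁(t) − P(S(0) < t − d), 0)`, and hence
`P(Δ ≤ d) ≤ inf_t [1 + min(F₁(t) − F₀((t−d)⁻), 0)]`. -/
theorem makarov_upper {Ω : Type*} [MeasurableSpace Ω] (μ : Measure Ω)
    [IsProbabilityMeasure μ] (S1 S0 : Ω → ℝ) (h1 : Measurable S1) (h0 : Measurable S0) :
    (∀ d t : ℝ,
        (μ {ω | S1 ω - S0 ω ≤ d}).toReal ≤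
          1 + min ((μ {ω | S1 ω ≤ t}).toReal - (μ {ω | S0 ω < t - d}).toReal) 0) ∧
      ∀ d : ℝ,
        (μ {ω | S1 ω - S0 ω ≤ d}).toReal ≤
          ⨅ t : ℝ, (1 + min ((μ {ω | S1 ω ≤ t}).toReal - (μ {ω | S0 ω < t - d}).toReal) 0) := by
  have key : ∀ d t : ℝ,
      (μ {ω | S1 ω - S0 ω ≤ d}).toReal ≤
        1 + min ((μ {ω | S1 ω ≤ t}).toReal - (μ {ω | S0 ω < t - d}).toReal) 0 := by
    intro d t
    have hle1 : (μ {ω | S1 ω - S0 ω ≤ d}).toReal ≤ 1 := by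
      have := measure_mono (μ := μ) (Set.subset_univ {ω | S1 ω - S0 ω ≤ d})
      rw [measure_univ] at this
      simpa using ENNReal.toReal_mono ENNReal.one_ne_top this
    have hmeasC : MeasurableSet {ω | S0 ω < t - d} := by
      exact measurableSet_lt h0 measurable_const
    have hcompl : (μ {ω | ¬ S0 ω < t - d}).toReal
        = 1 - (μ {ω | S0 ω < t - d}).toReal := by
      have : {ω | ¬ S0 ω < t - d} = {ω | S0 ω < t - d}ᶜ := rfl
      rw [this, measure_compl hmeasC (measure_ne_top μ _), measure_univ,
        ENNReal.toReal_sub_of_le (prob_le_one) ENNReal.one_ne_top, ENNReal.toReal_one]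
    have hsub : {ω | S1 ω - S0 ω ≤ d} ⊆ {ω | S1 ω ≤ t} ∪ {ω | ¬ S0 ω < t - d} := by
      intro ω hω
      simp only [Set.mem_setOf_eq, Set.mem_union, not_lt] at hω ⊢
      by_cases h : S1 ω ≤ t
      · exact Or.inl h
      · push_neg at h
        exact Or.inr (by linarith)
    have hμ : μ {ω | S1 ω - S0 ω ≤ d} ≤ μ {ω | S1 ω ≤ t} + μ {ω | ¬ S0 ω < t - d} :=
      le_trans (measure_mono hsub) (measure_union_le _ _)
    have hμR : (μ {ω | S1 ω - S0 ω ≤ d}).toReal ≤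
        (μ {ω | S1 ω ≤ t}).toReal + (μ {ω | ¬ S0 ω < t - d}).toReal := by
      have := ENNReal.toReal_mono
        (ENNReal.add_ne_top.mpr ⟨measure_ne_top μ _, measure_ne_top μ _⟩) hμ
      rwa [ENNReal.toReal_add (measure_ne_top μ _) (measure_ne_top μ _)] at this
    rw [hcompl] at hμR
    rcases le_total ((μ {ω | S1 ω ≤ t}).toReal - (μ {ω | S0 ω < t - d}).toReal) 0 with h | h
    · rw [min_eq_left h]; linarith
    · rw [min_eq_right h]; linarith
  exact ⟨key, fun d => le_ciInf (fun t => key d t)⟩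
end
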